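/- Let λ ∈ F_{q^m}^* with N(λ) of order q-1 in F_q^*. The field extension F_{q^m}(x) over K, where K = F_q(x^{q-1}/λ) is the field of constants of the extended automorphism φ_{q,λ} of F_{q^m}(x), has degree exactly m(q-1). -/

import Mathlib

/-- The fixed subfield of a field automorphism. -/
def fixedSubfield {F : Type*} [Field F] (e : F ≃+* F) : Subfield F where
  carrier := {a | e a = a}
  mul_mem' := by intro a b ha hb; simp only [Set.mem_setOf_eq, map_mul] at *; rw [ha, hb]
  one_mem' := by simp
  add_mem' := by intro a b ha hb; simp only [Set.mem_setOf_eq, map_add] at *; rw [ha, hb]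
  zero_mem' := by simp
  neg_mem' := by intro a ha; simp only [Set.mem_setOf_eq, map_neg] at *; rw [ha]
  inv_mem' := by intro a ha; simp only [Set.mem_setOf_eq, map_inv₀] at *; rw [ha]

lemma aux_exp_dvd {q m k : ℕ} (hq : 1 < q) (hm : 0 < m)
    (h : q ^ m - 1 ∣ q ^ k - 1) : m ∣ k := by
  have hr : k % m < m := Nat.mod_lt k hm
  have hrk : k % m ≤ k := Nat.mod_le k m
  have h1 : q ^ m - 1 ∣ q ^ (m * (k / m)) - 1 :=
    Nat.pow_sub_one_dvd_pow_sub_one q (Dvd.intro (k / m) rfl)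
  have hsplit : q ^ k = q ^ (m * (k / m)) * q ^ (k % m) := by
    rw [← pow_add, Nat.div_add_mod]
  have h2 : q ^ m - 1 ∣ q ^ k - q ^ (k % m) := by
    have heq : q ^ k - q ^ (k % m) = (q ^ (m * (k / m)) - 1) * q ^ (k % m) := by
      rw [Nat.sub_mul, one_mul, ← hsplit]
    rw [heq]
    exact Dvd.dvd.mul_right h1 _
  have hle : q ^ (k % m) ≤ q ^ k := Nat.pow_le_pow_right (by omega) hrk
  have hpos : 1 ≤ q ^ (k % m) := Nat.one_le_pow _ _ (by omega)
  have h4 : q ^ m - 1 ∣ q ^ (k % m) - 1 := by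
    have h3 := Nat.dvd_sub h h2
    have heq : q ^ k - 1 - (q ^ k - q ^ (k % m)) = q ^ (k % m) - 1 := by omega
    rwa [heq] at h3
  have h5 : q ^ (k % m) - 1 < q ^ m - 1 := by
    have : q ^ (k % m) < q ^ m := Nat.pow_lt_pow_right hq hr
    omega
  have h6 : q ^ (k % m) - 1 = 0 := Nat.eq_zero_of_dvd_of_lt h4 h5
  have h7 : q ^ (k % m) = 1 := by omega
  have h8 : k % m = 0 := by
    by_contra hne
    have := (Nat.pow_eq_one).mp h7
    omega
  exact Nat.dvd_of_mod_eq_zero h8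

set_option maxHeartbeats 1000000 in
set_option synthInstance.maxHeartbeats 400000 in
theorem stmt_4 (p s m : ℕ) [Fact p.Prime] (hs : 0 < s) (hm : 0 < m)
    (F : Type*) [Field F] [Fintype F] [CharP F p]
    (q : ℕ) (hq : q = p ^ s) (hcard : Fintype.card F = q ^ m)
    (lam : F) (hlam : lam ≠ 0)
    (hnorm : orderOf (lam ^ ((q ^ m - 1) / (q - 1))) = q - 1)
    (e : RatFunc F ≃+* RatFunc F)
    (he : ∀ f : Polynomial F,
      e (algebraMap (Polynomial F) (RatFunc F) f) =
        algebraMap (Polynomial F) (RatFunc F)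
          (∑ i ∈ Finset.range (f.natDegree + 1),
            Polynomial.C ((f.coeff i) ^ q * lam ^ i) * Polynomial.X ^ i)) :
    Module.rank (fixedSubfield e) (RatFunc F) = (m * (q - 1) : ℕ) := by
  have hp2 : 2 ≤ p := (Fact.out : p.Prime).two_le
  have hq1 : 1 < q := by rw [hq]; exact Nat.one_lt_pow hs.ne' (by omega)
  haveI : ExpChar F p := ExpChar.prime Fact.out
  set Φ : Polynomial F →+* Polynomial F :=
    Polynomial.eval₂RingHom (Polynomial.C.comp (iterateFrobenius F p s))
      (Polynomial.C lam * Polynomial.X) with hΦdef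
  have hΦC : ∀ a : F, Φ (Polynomial.C a) = Polynomial.C (a ^ q) := by
    intro a; simp [hΦdef, iterateFrobenius_def, hq]
  have hΦX : Φ Polynomial.X = Polynomial.C lam * Polynomial.X := by simp [hΦdef]
  -- e ∘ algebraMap = algebraMap ∘ Φ
  have hcomm : ∀ f : Polynomial F,
      e (algebraMap (Polynomial F) (RatFunc F) f)
        = algebraMap (Polynomial F) (RatFunc F) (Φ f) := by
    have key : (e : RatFunc F →+* RatFunc F).comp (algebraMap (Polynomial F) (RatFunc F)) =
        (algebraMap (Polynomial F) (RatFunc F)).comp Φ := by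
      apply Polynomial.ringHom_ext
      · intro a
        simp only [RingHom.comp_apply, RingEquiv.coe_toRingHom]
        rw [he (Polynomial.C a), hΦC]
        simp [Polynomial.natDegree_C]
      · simp only [RingHom.comp_apply, RingEquiv.coe_toRingHom]
        rw [he Polynomial.X, hΦX]
        simp only [Polynomial.natDegree_X, Finset.sum_range_succ, Finset.sum_range_one,
          Polynomial.coeff_X_zero, Polynomial.coeff_X_one, one_pow, pow_zero, pow_one,
          mul_one, one_mul, zero_pow (by omega : q ≠ 0), Polynomial.C_0, zero_mul, zero_add,
          map_mul, Finset.range_zero, Finset.sum_empty, Polynomial.C_1, map_one]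
    intro f
    exact RingHom.congr_fun key f
  have hcommk : ∀ (k : ℕ) (f : Polynomial F),
      (e ^ k) (algebraMap (Polynomial F) (RatFunc F) f) =
        algebraMap (Polynomial F) (RatFunc F) ((Φ ^ k) f) := by
    intro k
    induction k with
    | zero => intro f; rw [pow_zero, pow_zero]; rfl
    | succ k ih =>
      intro f
      rw [pow_succ', pow_succ']
      show e ((e ^ k) _) = _
      rw [ih, hcomm]
      rfl
  -- powers of Φ on C and X
  have hΦkC : ∀ (k : ℕ) (a : F), (Φ ^ k) (Polynomial.C a) = Polynomial.C (a ^ q ^ k) := by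
    intro k
    induction k with
    | zero => intro a; simp
    | succ k ih =>
      intro a
      rw [pow_succ']
      show Φ ((Φ ^ k) (Polynomial.C a)) = _
      rw [ih, hΦC, ← pow_mul, ← pow_succ]
  have hΦkX : ∀ k : ℕ,
      (Φ ^ k) Polynomial.X = Polynomial.C (lam ^ ∑ j ∈ Finset.range k, q ^ j) * Polynomial.X := by
    intro k
    induction k with
    | zero => simp
    | succ k ih =>
      rw [pow_succ']
      show Φ ((Φ ^ k) Polynomial.X) = _
      rw [ih, map_mul, hΦC, hΦX, ← pow_mul, geom_sum_succ, pow_add, pow_one,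
        mul_comm (∑ j ∈ Finset.range k, q ^ j) q, Polynomial.C_mul]
      ring
  -- arithmetic of geometric sums
  have hgeom : ∀ n : ℕ, (q - 1) * (∑ j ∈ Finset.range n, q ^ j) = q ^ n - 1 := by
    intro n
    induction n with
    | zero => simp
    | succ n ih =>
      rw [Finset.sum_range_succ, Nat.mul_add, ih, Nat.sub_mul, one_mul, ← pow_succ']
      have h1 : 1 ≤ q ^ n := Nat.one_le_pow _ _ (by omega)
      have h2 : q ^ n ≤ q ^ (n + 1) := Nat.pow_le_pow_right (by omega) (by omega)
      have h3 : q ^ n ≤ q * q ^ n := Nat.le_mul_of_pos_left _ (by omega)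
      omega
  have hdiv : (q ^ m - 1) / (q - 1) = ∑ j ∈ Finset.range m, q ^ j := by
    rw [← hgeom m, Nat.mul_div_cancel_left _ (by omega : 0 < q - 1)]
  rw [hdiv] at hnorm
  set N := lam ^ ∑ j ∈ Finset.range m, q ^ j with hN
  -- Frobenius powers act trivially
  have hcardpow : ∀ a : F, a ^ q ^ m = a := by
    intro a; rw [← hcard]; exact FiniteField.pow_card a
  have hpowF : ∀ (a : F) (k : ℕ), a ^ q ^ (m * k) = a := by
    intro a k
    induction k with
    | zero => simp
    | succ k ih => rw [Nat.mul_succ, pow_add, pow_mul, ih, hcardpow]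
  have htadd : ∀ a b : ℕ, (∑ j ∈ Finset.range (a + b), q ^ j)
      = (∑ j ∈ Finset.range a, q ^ j) + q ^ a * (∑ j ∈ Finset.range b, q ^ j) := by
    intro a b
    rw [Finset.sum_range_add, Finset.mul_sum]
    simp [pow_add]
  have hlamt : ∀ k : ℕ, lam ^ (∑ j ∈ Finset.range (m * k), q ^ j) = N ^ k := by
    intro k
    induction k with
    | zero => simp
    | succ k ih =>
      rw [Nat.mul_succ, htadd, pow_add, ih, mul_comm (q ^ (m * k)) _, pow_mul, ← hN,
        hpowF N k, pow_succ]
  -- e has order m * (q - 1)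
  have hΦn : ∀ f, (Φ ^ (m * (q - 1))) f = f := by
    have hid : (Φ ^ (m * (q - 1))) = RingHom.id _ := by
      apply Polynomial.ringHom_ext
      · intro a; rw [hΦkC, hpowF]; rfl
      · rw [hΦkX, hlamt]
        have hN1 : N ^ (q - 1) = 1 := by rw [← hnorm]; exact pow_orderOf_eq_one N
        rw [hN1]
        simp
    intro f; rw [hid]; rfl
  have hen : e ^ (m * (q - 1)) = 1 := by
    refine RingEquiv.ext fun x => ?_
    show (e ^ (m * (q - 1))) x = x
    conv_lhs => rw [← RatFunc.num_div_denom x]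
    rw [map_div₀, hcommk, hcommk, hΦn, hΦn, RatFunc.num_div_denom]
  have hdvd : ∀ k : ℕ, e ^ k = 1 → m * (q - 1) ∣ k := by
    intro k hk
    have hfix : ∀ f : Polynomial F, (Φ ^ k) f = f := by
      intro f
      have h1 := hcommk k f
      rw [hk] at h1
      have h2 : algebraMap (Polynomial F) (RatFunc F) ((Φ ^ k) f)
          = algebraMap (Polynomial F) (RatFunc F) f := by
        rw [← h1]; rfl
      exact IsFractionRing.injective (Polynomial F) (RatFunc F) h2
    have hfa : ∀ a : F, a ^ q ^ k = a := by
      intro a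
      have h3 := hfix (Polynomial.C a)
      rw [hΦkC] at h3
      exact Polynomial.C_injective h3
    obtain ⟨g, hg⟩ := IsCyclic.exists_generator (α := Fˣ)
    have hog : orderOf g = q ^ m - 1 := by
      rw [orderOf_eq_card_of_forall_mem_zpowers hg, Nat.card_units, Nat.card_eq_fintype_card,
        hcard]
    have hgq : g ^ q ^ k = g := by
      apply Units.ext
      rw [Units.val_pow_eq_pow_val]
      exact hfa g
    have hq_pos : 1 ≤ q ^ k := Nat.one_le_pow _ _ (by omega)
    have hg1 : g ^ (q ^ k - 1) = 1 := by
      have h3 : g ^ (q ^ k - 1) * g = 1 * g := by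
        rw [one_mul, ← pow_succ, Nat.sub_add_cancel hq_pos]
        exact hgq
      exact mul_right_cancel h3
    have hdvd1 : q ^ m - 1 ∣ q ^ k - 1 := by
      rw [← hog]; exact orderOf_dvd_of_pow_eq_one hg1
    obtain ⟨d, rfl⟩ := aux_exp_dvd hq1 hm hdvd1
    have hX := hfix Polynomial.X
    rw [hΦkX] at hX
    have hcoeff : lam ^ (∑ j ∈ Finset.range (m * d), q ^ j) = 1 := by
      have h4 := congrArg (fun f : Polynomial F => f.coeff 1) hX
      simp only [Polynomial.coeff_C_mul, Polynomial.coeff_X_one, mul_one] at h4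
      exact h4
    rw [hlamt] at hcoeff
    have h5 : orderOf N ∣ d := orderOf_dvd_of_pow_eq_one hcoeff
    rw [hnorm] at h5
    exact mul_dvd_mul_left m h5
  have horder : orderOf e = m * (q - 1) :=
    Nat.dvd_antisymm (orderOf_dvd_of_pow_eq_one hen) (hdvd _ (pow_orderOf_eq_one e))
  have hnpos : 0 < m * (q - 1) := Nat.mul_pos hm (by omega)
  have hfin : IsOfFinOrder e := by
    rw [← orderOf_pos_iff, horder]; exact hnpos
  letI : Fintype (Subgroup.zpowers e) := Fintype.ofEquiv _ (finEquivZPowers hfin)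
  have hGcard : Fintype.card (Subgroup.zpowers e) = m * (q - 1) := by
    rw [← horder, ← Fintype.card_fin (orderOf e)]
    exact (Fintype.card_congr (finEquivZPowers hfin)).symm
  have hsub : fixedSubfield e = FixedPoints.subfield (Subgroup.zpowers e) (RatFunc F) := by
    apply SetLike.ext
    intro x
    constructor
    · intro hx
      have hx' : e x = x := hx
      have hst : Subgroup.zpowers e ≤ MulAction.stabilizer (RingAut (RatFunc F)) x :=
        Subgroup.zpowers_le.mpr hx'
      show ∀ g : Subgroup.zpowers e, g • x = x
      intro g
      exact hst g.2
    · intro hx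
      have hx' : ∀ g : Subgroup.zpowers e, g • x = x := hx
      exact hx' ⟨e, Subgroup.mem_zpowers e⟩
  rw [hsub]
  have hfr := FixedPoints.finrank_eq_card (Subgroup.zpowers e) (RatFunc F)
  rw [hGcard] at hfr
  rw [← Module.finrank_eq_rank, hfr]
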